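/- (Uniqueness, Theorem 2.3.) Let α ∈ (1,2], β ∈ (0,1), ξ ∈ (0,1). Assume f : [0,1] × ℝ × ℝ → ℝ is continuous and there exists k > 0 with |f(t,u,v) − f(t,ū,v̄)| ≤ k(|u−ū| + |v−v̄|) for all t ∈ [0,1] and u, v, ū, v̄ ∈ ℝ. If max{ 2·G*·k, 2k·(Γ(3−α)Γ(α−β+1) + Γ(2−β))/(Γ(3−α)Γ(α−β+1)) } < 1, then there exists exactly one pair (u, v) of continuous functions u, v : [0,1] → ℝ satisfying, for all t ∈ [0,1]: u(t) = ∫₀¹ G(t,s) f(s, u(s), v(s)) ds and v(t) = ∫₀ᵗ f(s, u(s), v(s)) ds − (Γ(2−β) t^{2−α}/(Γ(3−α)Γ(α−β))) ∫₀¹ (1−s)^{α−β−1} f(s, u(s), v(s)) ds. (Equivalently, the boundary value problem ᶜDᵅu(t) = f(t, u(t), ᶜD^{α−1}u(t)), u(0) = ξu(1), ᶜDᵝu(0) = ξ·ᶜDᵝu(1) has a unique solution.) -/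

import Mathlib

open Real MeasureTheory Set

/-- The Green function of the fractional boundary value problem. -/
noncomputable def G (α β ξ : ℝ) (t s : ℝ) : ℝ :=
  if s ≤ t then
    ((1 - ξ) * (t - s) ^ (α - 1) + ξ * (1 - s) ^ (α - 1)) / (Real.Gamma α * (1 - ξ))
      - Real.Gamma (2 - β) * (ξ + (1 - ξ) * t) * (1 - s) ^ (α - β - 1)
          / (Real.Gamma (α - β) * (1 - ξ))
  else
    ξ * (1 - s) ^ (α - 1) / (Real.Gamma α * (1 - ξ))
      - Real.Gamma (2 - β) * (ξ + (1 - ξ) * t) * (1 - s) ^ (α - β - 1)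
          / (Real.Gamma (α - β) * (1 - ξ))

/-- `G* = sup_{t ∈ [0,1]} ∫₀¹ |G(t,s)| ds`. -/
noncomputable def Gstar (α β ξ : ℝ) : ℝ :=
  ⨆ t : Set.Icc (0 : ℝ) 1, ∫ s in (0 : ℝ)..1, |G α β ξ (t : ℝ) s|

/-- The regular part of the Green function. -/
noncomputable def Ag (α ξ : ℝ) (t s : ℝ) : ℝ :=
  ((1 - ξ) * (max (t - s) 0) ^ (α - 1) + ξ * (1 - s) ^ (α - 1)) / (Real.Gamma α * (1 - ξ))

/-- The coefficient of the singular part of the Green function. -/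
noncomputable def Bg (α β ξ : ℝ) (t : ℝ) : ℝ :=
  Real.Gamma (2 - β) * (ξ + (1 - ξ) * t) / (Real.Gamma (α - β) * (1 - ξ))

lemma G_eq {α : ℝ} (β ξ : ℝ) (hα1 : 1 < α) (t s : ℝ) :
    G α β ξ t s = Ag α ξ t s - Bg α β ξ t * (1 - s) ^ (α - β - 1) := by
  unfold G Ag Bg
  split_ifs with h
  · rw [max_eq_left (sub_nonneg.2 h)]; ring
  · rw [max_eq_right (by push_neg at h; linarith : t - s ≤ (0:ℝ)),
      Real.zero_rpow (by linarith : α - 1 ≠ 0)]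
    ring

lemma Ag_continuous {α : ℝ} (ξ : ℝ) (hα1 : 1 < α) :
    Continuous fun q : ℝ × ℝ => Ag α ξ q.1 q.2 := by
  unfold Ag
  apply Continuous.div_const
  apply Continuous.add
  · exact continuous_const.mul ((Real.continuous_rpow_const (by linarith)).comp
      ((continuous_fst.sub continuous_snd).max continuous_const))
  · exact continuous_const.mul ((Real.continuous_rpow_const (by linarith)).comp
      (continuous_const.sub continuous_snd))

lemma Bg_continuous (α β ξ : ℝ) : Continuous (Bg α β ξ) := by
  unfold Bg
  exact (continuous_const.mul (continuous_const.add (continuous_const.mul continuous_id))).div_const _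

set_option maxHeartbeats 1000000 in
theorem uniqueness_of_solution (α β ξ : ℝ) (hα : 1 < α ∧ α ≤ 2) (hβ : 0 < β ∧ β < 1)
    (hξ : 0 < ξ ∧ ξ < 1) (f : ℝ → ℝ → ℝ → ℝ)
    (hf : ContinuousOn (fun q : ℝ × ℝ × ℝ => f q.1 q.2.1 q.2.2)
        (Set.Icc (0 : ℝ) 1 ×ˢ (Set.univ : Set (ℝ × ℝ))))
    (k : ℝ) (hk : 0 < k)
    (hlip : ∀ t ∈ Set.Icc (0 : ℝ) 1, ∀ u v u' v' : ℝ,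
        |f t u v - f t u' v'| ≤ k * (|u - u'| + |v - v'|))
    (hcontr : max (2 * Gstar α β ξ * k)
        (2 * k * ((Real.Gamma (3 - α) * Real.Gamma (α - β + 1) + Real.Gamma (2 - β))
            / (Real.Gamma (3 - α) * Real.Gamma (α - β + 1)))) < 1) :
    ∃ u v : ℝ → ℝ,
      (ContinuousOn u (Set.Icc 0 1) ∧ ContinuousOn v (Set.Icc 0 1)
        ∧ (∀ t ∈ Set.Icc (0 : ℝ) 1,
            u t = ∫ s in (0 : ℝ)..1, G α β ξ t s * f s (u s) (v s))
        ∧ (∀ t ∈ Set.Icc (0 : ℝ) 1,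
            v t = (∫ s in (0 : ℝ)..t, f s (u s) (v s))
              - (Real.Gamma (2 - β) * t ^ (2 - α) / (Real.Gamma (3 - α) * Real.Gamma (α - β)))
                  * (∫ s in (0 : ℝ)..1, (1 - s) ^ (α - β - 1) * f s (u s) (v s))))
      ∧ ∀ u' v' : ℝ → ℝ,
          (ContinuousOn u' (Set.Icc 0 1) ∧ ContinuousOn v' (Set.Icc 0 1)
            ∧ (∀ t ∈ Set.Icc (0 : ℝ) 1,
                u' t = ∫ s in (0 : ℝ)..1, G α β ξ t s * f s (u' s) (v' s))
            ∧ (∀ t ∈ Set.Icc (0 : ℝ) 1,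
                v' t = (∫ s in (0 : ℝ)..t, f s (u' s) (v' s))
                  - (Real.Gamma (2 - β) * t ^ (2 - α)
                        / (Real.Gamma (3 - α) * Real.Gamma (α - β)))
                      * (∫ s in (0 : ℝ)..1, (1 - s) ^ (α - β - 1) * f s (u' s) (v' s)))) →
          ∀ t ∈ Set.Icc (0 : ℝ) 1, u' t = u t ∧ v' t = v t := by
  obtain ⟨hα1, hα2⟩ := hα
  obtain ⟨hβ0, hβ1⟩ := hβ
  obtain ⟨hξ0, hξ1⟩ := hξ
  have h1ξ : (0:ℝ) < 1 - ξ := by linarith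
  have hαβ : (0:ℝ) < α - β := by linarith
  have hΓα : 0 < Real.Gamma α := Real.Gamma_pos_of_pos (by linarith)
  have hΓ2β : 0 < Real.Gamma (2 - β) := Real.Gamma_pos_of_pos (by linarith)
  have hΓαβ : 0 < Real.Gamma (α - β) := Real.Gamma_pos_of_pos hαβ
  have hΓ3α : 0 < Real.Gamma (3 - α) := Real.Gamma_pos_of_pos (by linarith)
  have hΓαβ1 : 0 < Real.Gamma (α - β + 1) := Real.Gamma_pos_of_pos (by linarith)
  have hr : (-1:ℝ) < α - β - 1 := by linarith
  -- the singular weight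
  set w : ℝ → ℝ := fun s => (1 - s) ^ (α - β - 1) with hw_def
  have hw_int : IntervalIntegrable w volume 0 1 := by
    have := (intervalIntegral.intervalIntegrable_rpow' (a := 0) (b := 1) hr).comp_sub_left 1
    simpa using this.symm
  have hw_nonneg : ∀ s ∈ Set.Icc (0:ℝ) 1, 0 ≤ w s := fun s hs =>
    Real.rpow_nonneg (by linarith [hs.2]) _
  have hw_val : (∫ s in (0:ℝ)..1, w s) = 1 / (α - β) := by
    have h1 : (∫ s in (0:ℝ)..1, w s) = ∫ x in (0:ℝ)..1, x ^ (α - β - 1) := by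
      have := intervalIntegral.integral_comp_sub_left (a := 0) (b := 1)
        (fun x : ℝ => x ^ (α - β - 1)) 1
      simpa [hw_def] using this
    rw [h1, integral_rpow (Or.inl hr)]
    rw [Real.one_rpow, Real.zero_rpow (by linarith : α - β - 1 + 1 ≠ 0)]
    have : α - β - 1 + 1 = α - β := by ring
    rw [this]
    ring
  have hG : ∀ t s : ℝ, G α β ξ t s = Ag α ξ t s - Bg α β ξ t * w s := fun t s =>
    G_eq β ξ hα1 t s
  have contA : Continuous fun q : ℝ × ℝ => Ag α ξ q.1 q.2 := Ag_continuous ξ hα1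
  have contB : Continuous (Bg α β ξ) := Bg_continuous α β ξ
  -- bounds on A and B
  have hA0 : ∀ t s : ℝ, s ≤ 1 → 0 ≤ Ag α ξ t s := by
    intro t s hs
    unfold Ag
    apply div_nonneg _ (mul_nonneg hΓα.le h1ξ.le)
    exact add_nonneg (mul_nonneg h1ξ.le (Real.rpow_nonneg (le_max_right _ _) _))
      (mul_nonneg hξ0.le (Real.rpow_nonneg (by linarith) _))
  have hAbd : ∀ t ∈ Set.Icc (0:ℝ) 1, ∀ s ∈ Set.Icc (0:ℝ) 1,
      |Ag α ξ t s| ≤ 1 / (Real.Gamma α * (1 - ξ)) := by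
    intro t ht s hs
    rw [abs_of_nonneg (hA0 t s hs.2)]
    unfold Ag
    have h1 : (max (t - s) 0) ^ (α - 1) ≤ 1 :=
      Real.rpow_le_one (le_max_right _ _)
        (max_le (by linarith [ht.2, hs.1]) zero_le_one) (by linarith)
    have h2 : (1 - s) ^ (α - 1) ≤ 1 :=
      Real.rpow_le_one (by linarith [hs.2]) (by linarith [hs.1]) (by linarith)
    have hnum : (1 - ξ) * (max (t - s) 0) ^ (α - 1) + ξ * (1 - s) ^ (α - 1) ≤ 1 := by
      nlinarith [Real.rpow_nonneg (le_max_right (t - s) 0) (α - 1),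
        Real.rpow_nonneg (by linarith [hs.2] : (0:ℝ) ≤ 1 - s) (α - 1)]
    exact (div_le_div_iff_of_pos_right (mul_pos hΓα h1ξ)).2 hnum
  have hB0 : ∀ t ∈ Set.Icc (0:ℝ) 1, 0 ≤ Bg α β ξ t := by
    intro t ht
    unfold Bg
    apply div_nonneg _ (mul_nonneg hΓαβ.le h1ξ.le)
    have : 0 ≤ ξ + (1 - ξ) * t := by nlinarith [ht.1]
    exact mul_nonneg hΓ2β.le this
  have hBbd : ∀ t ∈ Set.Icc (0:ℝ) 1,
      Bg α β ξ t ≤ Real.Gamma (2 - β) / (Real.Gamma (α - β) * (1 - ξ)) := by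
    intro t ht
    unfold Bg
    have hnum : Real.Gamma (2 - β) * (ξ + (1 - ξ) * t) ≤ Real.Gamma (2 - β) := by
      nlinarith [mul_nonneg hΓ2β.le (mul_nonneg h1ξ.le (by linarith [ht.2] : (0:ℝ) ≤ 1 - t))]
    exact (div_le_div_iff_of_pos_right (mul_pos hΓαβ h1ξ)).2 hnum
  -- integrability facts
  have hAint : ∀ t : ℝ, ∀ g : ℝ → ℝ, Continuous g →
      IntervalIntegrable (fun s => Ag α ξ t s * g s) volume 0 1 := by
    intro t g hg
    exact ((contA.comp (continuous_const.prodMk continuous_id)).mul hg).intervalIntegrable 0 1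
  have hwmul : ∀ g : ℝ → ℝ, Continuous g →
      IntervalIntegrable (fun s => w s * g s) volume 0 1 := fun g hg =>
    hw_int.mul_continuousOn hg.continuousOn
  have hGmul : ∀ t : ℝ, ∀ g : ℝ → ℝ, Continuous g →
      IntervalIntegrable (fun s => G α β ξ t s * g s) volume 0 1 := by
    intro t g hg
    have h1 := hAint t g hg
    have h2 := (hwmul g hg).const_mul (Bg α β ξ t)
    have h3 := h1.sub h2
    apply h3.congr
    intro s _
    dsimp only
    rw [hG]; ring
  -- the state space and the integral operator
  have hGint : ∀ t : ℝ, IntervalIntegrable (fun s => |G α β ξ t s|) volume 0 1 := by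
    intro t
    have := hGmul t (fun _ => (1:ℝ)) continuous_const
    simp only [mul_one] at this
    exact this.abs
  set c1 := 1 / (Real.Gamma α * (1 - ξ)) with hc1
  set c2 := Real.Gamma (2 - β) / (Real.Gamma (α - β) * (1 - ξ)) with hc2
  have hGptbd : ∀ t ∈ Set.Icc (0:ℝ) 1, ∀ s ∈ Set.Icc (0:ℝ) 1,
      |G α β ξ t s| ≤ c1 + c2 * w s := by
    intro t ht s hs
    rw [hG]
    refine (abs_sub _ _).trans ?_
    have h1 := hAbd t ht s hs
    have h2 : |Bg α β ξ t * w s| ≤ c2 * w s := by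
      rw [abs_of_nonneg (mul_nonneg (hB0 t ht) (hw_nonneg s hs))]
      exact mul_le_mul_of_nonneg_right (hBbd t ht) (hw_nonneg s hs)
    linarith
  have hGintbd : ∀ t ∈ Set.Icc (0:ℝ) 1,
      (∫ s in (0:ℝ)..1, |G α β ξ t s|) ≤ c1 + c2 * (1/(α-β)) := by
    intro t ht
    have hint2 : IntervalIntegrable (fun s => c1 + c2 * w s) volume 0 1 :=
      intervalIntegrable_const.add (hw_int.const_mul c2)
    have hmono := intervalIntegral.integral_mono_on zero_le_one (hGint t) hint2
      (fun s hs => hGptbd t ht s hs)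
    refine hmono.trans ?_
    rw [intervalIntegral.integral_add intervalIntegrable_const (hw_int.const_mul c2),
      intervalIntegral.integral_const, intervalIntegral.integral_const_mul, hw_val]
    simp
  have hbdd : BddAbove (Set.range fun t : Set.Icc (0:ℝ) 1 =>
      ∫ s in (0:ℝ)..1, |G α β ξ (t:ℝ) s|) := by
    refine ⟨c1 + c2 * (1/(α-β)), ?_⟩
    rintro y ⟨t, rfl⟩
    exact hGintbd t t.2
  have hGstar_le : ∀ t ∈ Set.Icc (0:ℝ) 1,
      (∫ s in (0:ℝ)..1, |G α β ξ t s|) ≤ Gstar α β ξ := by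
    intro t ht
    exact le_ciSup hbdd (⟨t, ht⟩ : Set.Icc (0:ℝ) 1)
  have hGstar0 : 0 ≤ Gstar α β ξ := by
    refine le_trans ?_ (hGstar_le 0 ⟨le_refl 0, zero_le_one⟩)
    exact intervalIntegral.integral_nonneg zero_le_one fun s hs => abs_nonneg _
  -- the map Φ
  let prj : ℝ → Set.Icc (0:ℝ) 1 := Set.projIcc 0 1 zero_le_one
  have hprj : ∀ (s : ℝ) (hs : s ∈ Set.Icc (0:ℝ) 1), prj s = ⟨s, hs⟩ := fun s hs =>
    Set.projIcc_of_mem zero_le_one hs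
  let X := C(Set.Icc (0:ℝ) 1, ℝ) × C(Set.Icc (0:ℝ) 1, ℝ)
  let Φ : X → ℝ → ℝ := fun p s => f (prj s : ℝ) (p.1 (prj s)) (p.2 (prj s))
  have hΦc : ∀ p : X, Continuous (Φ p) := by
    intro p
    have hg : Continuous fun s : ℝ =>
        (((prj s : Set.Icc (0:ℝ) 1) : ℝ), (p.1 (prj s), p.2 (prj s))) := by
      refine Continuous.prodMk ?_ (Continuous.prodMk ?_ ?_)
      · exact continuous_subtype_val.comp continuous_projIcc
      · exact p.1.continuous.comp continuous_projIcc
      · exact p.2.continuous.comp continuous_projIcc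
    exact hf.comp_continuous hg fun s => ⟨(prj s).2, trivial⟩
  have hΦlip : ∀ p q : X, ∀ s : ℝ,
      |Φ p s - Φ q s| ≤ k * (dist p.1 q.1 + dist p.2 q.2) := by
    intro p q s
    refine (hlip (prj s : ℝ) (prj s).2 (p.1 (prj s)) (p.2 (prj s)) (q.1 (prj s)) (q.2 (prj s))).trans ?_
    have h2 : |p.1 (prj s) - q.1 (prj s)| ≤ dist p.1 q.1 := by
      rw [← Real.dist_eq]; exact ContinuousMap.dist_apply_le_dist _
    have h3 : |p.2 (prj s) - q.2 (prj s)| ≤ dist p.2 q.2 := by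
      rw [← Real.dist_eq]; exact ContinuousMap.dist_apply_le_dist _
    exact mul_le_mul_of_nonneg_left (add_le_add h2 h3) hk.le
  -- the two components of the operator
  let T1 : X → ℝ → ℝ := fun p t => ∫ s in (0:ℝ)..1, G α β ξ t s * Φ p s
  let T2 : X → ℝ → ℝ := fun p t => (∫ s in (0:ℝ)..t, Φ p s)
      - (Real.Gamma (2 - β) * t ^ (2 - α) / (Real.Gamma (3 - α) * Real.Gamma (α - β)))
          * ∫ s in (0:ℝ)..1, w s * Φ p s
  have hT1eq : ∀ p : X, ∀ t : ℝ, T1 p t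
      = (∫ s in (0:ℝ)..1, Ag α ξ t s * Φ p s)
        - Bg α β ξ t * ∫ s in (0:ℝ)..1, w s * Φ p s := by
    intro p t
    show (∫ s in (0:ℝ)..1, G α β ξ t s * Φ p s) = _
    have heq : ∀ s : ℝ, G α β ξ t s * Φ p s
        = Ag α ξ t s * Φ p s - Bg α β ξ t * (w s * Φ p s) := by
      intro s; rw [hG]; ring
    simp_rw [heq]
    rw [intervalIntegral.integral_sub (hAint t _ (hΦc p)) ((hwmul _ (hΦc p)).const_mul _),
      intervalIntegral.integral_const_mul]
  have hT1c : ∀ p : X, Continuous (T1 p) := by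
    intro p
    have h1 : Continuous fun t : ℝ => ∫ s in (0:ℝ)..1, Ag α ξ t s * Φ p s := by
      apply intervalIntegral.continuous_parametric_intervalIntegral_of_continuous'
      exact contA.mul ((hΦc p).comp continuous_snd)
    have h2 : Continuous fun t : ℝ =>
        (∫ s in (0:ℝ)..1, Ag α ξ t s * Φ p s)
          - Bg α β ξ t * ∫ s in (0:ℝ)..1, w s * Φ p s :=
      h1.sub (contB.mul continuous_const)
    have hfe : T1 p = fun t => (∫ s in (0:ℝ)..1, Ag α ξ t s * Φ p s)
        - Bg α β ξ t * ∫ s in (0:ℝ)..1, w s * Φ p s := funext (hT1eq p)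
    rw [hfe]; exact h2
  have hpow : Continuous fun x : Set.Icc (0:ℝ) 1 => ((x:ℝ)) ^ (2 - α) := by
    rcases eq_or_lt_of_le hα2 with h2 | h2
    · have he : (2:ℝ) - α = 0 := by rw [← h2]; ring
      have : (fun x : Set.Icc (0:ℝ) 1 => ((x:ℝ)) ^ (2 - α)) = fun _ => (1:ℝ) := by
        funext x; rw [he, Real.rpow_zero]
      rw [this]; exact continuous_const
    · exact (Real.continuous_rpow_const (by linarith)).comp continuous_subtype_val
  have hT2c : ∀ p : X, Continuous fun x : Set.Icc (0:ℝ) 1 => T2 p (x:ℝ) := by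
    intro p
    have hprim : Continuous fun t : ℝ => ∫ s in (0:ℝ)..t, Φ p s :=
      intervalIntegral.continuous_primitive (fun a b => (hΦc p).intervalIntegrable a b) 0
    exact (hprim.comp continuous_subtype_val).sub
      (((continuous_const.mul hpow).div_const _).mul continuous_const)
  let T : X → X := fun p =>
    (⟨fun x => T1 p (x:ℝ), (hT1c p).comp continuous_subtype_val⟩,
     ⟨fun x => T2 p (x:ℝ), hT2c p⟩)
  -- contraction constants
  set K1 := 2 * Gstar α β ξ * k with hK1
  set K2 := 2 * k * ((Real.Gamma (3 - α) * Real.Gamma (α - β + 1) + Real.Gamma (2 - β))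
      / (Real.Gamma (3 - α) * Real.Gamma (α - β + 1))) with hK2
  have hK2pos : 0 < K2 :=
    mul_pos (by linarith)
      (div_pos (add_pos (mul_pos hΓ3α hΓαβ1) hΓ2β) (mul_pos hΓ3α hΓαβ1))
  -- T1 estimate
  have hT1est : ∀ p q : X, ∀ t ∈ Set.Icc (0:ℝ) 1,
      |T1 p t - T1 q t| ≤ K1 * dist p q := by
    intro p q t ht
    set c := k * (dist p.1 q.1 + dist p.2 q.2) with hc
    have hc0 : 0 ≤ c :=
      mul_nonneg hk.le (add_nonneg dist_nonneg dist_nonneg)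
    have hdiff : T1 p t - T1 q t = ∫ s in (0:ℝ)..1, G α β ξ t s * (Φ p s - Φ q s) := by
      show (∫ s in (0:ℝ)..1, G α β ξ t s * Φ p s)
          - (∫ s in (0:ℝ)..1, G α β ξ t s * Φ q s) = _
      rw [← intervalIntegral.integral_sub (hGmul t _ (hΦc p)) (hGmul t _ (hΦc q))]
      congr 1; funext s; ring
    rw [hdiff]
    have h1 : |∫ s in (0:ℝ)..1, G α β ξ t s * (Φ p s - Φ q s)|
        ≤ ∫ s in (0:ℝ)..1, |G α β ξ t s * (Φ p s - Φ q s)| :=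
      intervalIntegral.abs_integral_le_integral_abs zero_le_one
    have h2 : (∫ s in (0:ℝ)..1, |G α β ξ t s * (Φ p s - Φ q s)|)
        ≤ ∫ s in (0:ℝ)..1, |G α β ξ t s| * c := by
      apply intervalIntegral.integral_mono_on zero_le_one
      · exact (hGmul t _ ((hΦc p).sub (hΦc q))).abs
      · exact (hGint t).mul_const c
      · intro s hs
        rw [abs_mul]
        exact mul_le_mul_of_nonneg_left (hΦlip p q s) (abs_nonneg _)
    have h3 : (∫ s in (0:ℝ)..1, |G α β ξ t s| * c)
        = (∫ s in (0:ℝ)..1, |G α β ξ t s|) * c :=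
      intervalIntegral.integral_mul_const c _
    have h4 : (∫ s in (0:ℝ)..1, |G α β ξ t s|) * c ≤ Gstar α β ξ * c :=
      mul_le_mul_of_nonneg_right (hGstar_le t ht) hc0
    have h5 : Gstar α β ξ * c ≤ K1 * dist p q := by
      rw [hc, hK1, Prod.dist_eq]
      have hd1 : dist p.1 q.1 ≤ max (dist p.1 q.1) (dist p.2 q.2) := le_max_left _ _
      have hd2 : dist p.2 q.2 ≤ max (dist p.1 q.1) (dist p.2 q.2) := le_max_right _ _
      nlinarith [mul_nonneg hGstar0 hk.le]
    have := h1.trans ((h2.trans_eq h3).trans (h4.trans h5))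
    linarith
  -- T2 estimate
  have hT2est : ∀ p q : X, ∀ t ∈ Set.Icc (0:ℝ) 1,
      |T2 p t - T2 q t| ≤ K2 * dist p q := by
    intro p q t ht
    set c := k * (dist p.1 q.1 + dist p.2 q.2) with hc
    have hc0 : 0 ≤ c :=
      mul_nonneg hk.le (add_nonneg dist_nonneg dist_nonneg)
    set coef := Real.Gamma (2 - β) * t ^ (2 - α) / (Real.Gamma (3 - α) * Real.Gamma (α - β))
      with hcoef
    have hcoef0 : 0 ≤ coef :=
      div_nonneg (mul_nonneg hΓ2β.le (Real.rpow_nonneg ht.1 _))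
        (mul_nonneg hΓ3α.le hΓαβ.le)
    have hpw : t ^ (2 - α) ≤ 1 := Real.rpow_le_one ht.1 ht.2 (by linarith)
    have hcoefbd : coef ≤ Real.Gamma (2 - β) / (Real.Gamma (3 - α) * Real.Gamma (α - β)) := by
      rw [hcoef]
      exact (div_le_div_iff_of_pos_right (mul_pos hΓ3α hΓαβ)).2 (by nlinarith [hΓ2β.le])
    have e1 : |(∫ s in (0:ℝ)..t, Φ p s) - ∫ s in (0:ℝ)..t, Φ q s| ≤ c := by
      rw [← intervalIntegral.integral_sub ((hΦc p).intervalIntegrable 0 t)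
        ((hΦc q).intervalIntegrable 0 t)]
      have h1 : |∫ s in (0:ℝ)..t, (Φ p s - Φ q s)|
          ≤ ∫ s in (0:ℝ)..t, |Φ p s - Φ q s| :=
        intervalIntegral.abs_integral_le_integral_abs ht.1
      have h2 : (∫ s in (0:ℝ)..t, |Φ p s - Φ q s|) ≤ ∫ s in (0:ℝ)..t, c := by
        apply intervalIntegral.integral_mono_on ht.1
        · exact (((hΦc p).sub (hΦc q)).abs).intervalIntegrable 0 t
        · exact intervalIntegrable_const
        · intro s _; exact hΦlip p q s
      have h3 : (∫ s in (0:ℝ)..t, (c:ℝ)) = t * c := by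
        rw [intervalIntegral.integral_const]; simp [smul_eq_mul]
      have h4 : t * c ≤ c := by
        have h5 := mul_le_mul_of_nonneg_right ht.2 hc0
        simpa using h5
      linarith [h1.trans (h2.trans_eq h3)]
    have e2 : |(∫ s in (0:ℝ)..1, w s * Φ p s) - ∫ s in (0:ℝ)..1, w s * Φ q s|
        ≤ c * (1/(α-β)) := by
      rw [← intervalIntegral.integral_sub (hwmul _ (hΦc p)) (hwmul _ (hΦc q))]
      have heq : ∀ s : ℝ, w s * Φ p s - w s * Φ q s = w s * (Φ p s - Φ q s) := fun s => by ring
      simp_rw [heq]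
      have h1 : |∫ s in (0:ℝ)..1, w s * (Φ p s - Φ q s)|
          ≤ ∫ s in (0:ℝ)..1, |w s * (Φ p s - Φ q s)| :=
        intervalIntegral.abs_integral_le_integral_abs zero_le_one
      have h2 : (∫ s in (0:ℝ)..1, |w s * (Φ p s - Φ q s)|)
          ≤ ∫ s in (0:ℝ)..1, w s * c := by
        apply intervalIntegral.integral_mono_on zero_le_one
        · exact (hwmul _ ((hΦc p).sub (hΦc q))).abs
        · exact hw_int.mul_const c
        · intro s hs
          rw [abs_mul, abs_of_nonneg (hw_nonneg s hs)]
          exact mul_le_mul_of_nonneg_left (hΦlip p q s) (hw_nonneg s hs)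
      have h3 : (∫ s in (0:ℝ)..1, w s * c) = (1/(α-β)) * c := by
        rw [intervalIntegral.integral_mul_const, hw_val]
      have := h1.trans (h2.trans_eq h3)
      linarith [this]
    have hsplit : T2 p t - T2 q t
        = ((∫ s in (0:ℝ)..t, Φ p s) - ∫ s in (0:ℝ)..t, Φ q s)
          - coef * ((∫ s in (0:ℝ)..1, w s * Φ p s) - ∫ s in (0:ℝ)..1, w s * Φ q s) := by
      show ((∫ s in (0:ℝ)..t, Φ p s) - _ * ∫ s in (0:ℝ)..1, w s * Φ p s)
          - ((∫ s in (0:ℝ)..t, Φ q s) - _ * ∫ s in (0:ℝ)..1, w s * Φ q s) = _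
      rw [hcoef]; ring
    rw [hsplit]
    have habs : |((∫ s in (0:ℝ)..t, Φ p s) - ∫ s in (0:ℝ)..t, Φ q s)
          - coef * ((∫ s in (0:ℝ)..1, w s * Φ p s) - ∫ s in (0:ℝ)..1, w s * Φ q s)|
        ≤ c + coef * (c * (1/(α-β))) := by
      refine (abs_sub _ _).trans ?_
      have h6 : |coef * ((∫ s in (0:ℝ)..1, w s * Φ p s) - ∫ s in (0:ℝ)..1, w s * Φ q s)|
          ≤ coef * (c * (1/(α-β))) := by
        rw [abs_mul, abs_of_nonneg hcoef0]
        exact mul_le_mul_of_nonneg_left e2 hcoef0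
      linarith
    refine habs.trans ?_
    -- final algebra
    have hΓrec : Real.Gamma (α - β + 1) = (α - β) * Real.Gamma (α - β) :=
      Real.Gamma_add_one hαβ.ne'
    set R := (Real.Gamma (3 - α) * Real.Gamma (α - β + 1) + Real.Gamma (2 - β))
        / (Real.Gamma (3 - α) * Real.Gamma (α - β + 1)) with hR
    have hR0 : 0 ≤ R :=
      (div_pos (add_pos (mul_pos hΓ3α hΓαβ1) hΓ2β) (mul_pos hΓ3α hΓαβ1)).le
    have hRid : 1 + (Real.Gamma (2 - β) / (Real.Gamma (3 - α) * Real.Gamma (α - β)))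
        * (1/(α-β)) = R := by
      rw [hR, hΓrec]
      field_simp
    have step1 : c + coef * (c * (1/(α-β)))
        ≤ c + (Real.Gamma (2 - β) / (Real.Gamma (3 - α) * Real.Gamma (α - β)))
            * (c * (1/(α-β))) := by
      have hx0 : 0 ≤ c * (1/(α-β)) := mul_nonneg hc0 (by positivity)
      have := mul_le_mul_of_nonneg_right hcoefbd hx0
      linarith
    have step2 : c + (Real.Gamma (2 - β) / (Real.Gamma (3 - α) * Real.Gamma (α - β)))
        * (c * (1/(α-β))) = c * R := by
      rw [← hRid]; ring
    have hcM : c ≤ 2 * k * dist p q := by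
      rw [hc, Prod.dist_eq]
      have hd1 : dist p.1 q.1 ≤ max (dist p.1 q.1) (dist p.2 q.2) := le_max_left _ _
      have hd2 : dist p.2 q.2 ≤ max (dist p.1 q.1) (dist p.2 q.2) := le_max_right _ _
      nlinarith [hk.le]
    have step3 : c * R ≤ (2 * k * dist p q) * R := mul_le_mul_of_nonneg_right hcM hR0
    have step4 : (2 * k * dist p q) * R = K2 * dist p q := by rw [hK2]; ring
    linarith [step1, step3]
  -- T is a contraction
  set KR := max K1 K2 with hKRdef
  have hKR0 : 0 ≤ KR := le_trans hK2pos.le (le_max_right _ _)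
  have hKR1 : KR < 1 := hcontr
  have hTlip : LipschitzWith (Real.toNNReal KR) T := by
    apply LipschitzWith.of_dist_le_mul
    intro p q
    rw [Real.coe_toNNReal KR hKR0]
    rw [Prod.dist_eq]
    apply max_le
    · rw [ContinuousMap.dist_le (mul_nonneg hKR0 dist_nonneg)]
      intro x
      rw [Real.dist_eq]
      calc |T1 p (x:ℝ) - T1 q (x:ℝ)| ≤ K1 * dist p q := hT1est p q x x.2
        _ ≤ KR * dist p q := mul_le_mul_of_nonneg_right (le_max_left _ _) dist_nonneg
    · rw [ContinuousMap.dist_le (mul_nonneg hKR0 dist_nonneg)]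
      intro x
      rw [Real.dist_eq]
      calc |T2 p (x:ℝ) - T2 q (x:ℝ)| ≤ K2 * dist p q := hT2est p q x x.2
        _ ≤ KR * dist p q := mul_le_mul_of_nonneg_right (le_max_right _ _) dist_nonneg
  have hCW : ContractingWith (Real.toNNReal KR) T :=
    ⟨Real.toNNReal_lt_one.2 hKR1, hTlip⟩
  haveI : Nonempty X := ⟨(ContinuousMap.const _ 0, ContinuousMap.const _ 0)⟩
  let P := ContractingWith.fixedPoint T hCW
  have hP : T P = P := hCW.fixedPoint_isFixedPt
  -- the solution
  refine ⟨fun t => P.1 (prj t), fun t => P.2 (prj t), ⟨?_, ?_, ?_, ?_⟩, ?_⟩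
  · exact (P.1.continuous.comp continuous_projIcc).continuousOn
  · exact (P.2.continuous.comp continuous_projIcc).continuousOn
  · intro t ht
    have h1 : P.1 (prj t) = T1 P t := by
      conv_lhs => rw [← hP]
      show T1 P ((prj t : Set.Icc (0:ℝ) 1):ℝ) = T1 P t
      rw [hprj t ht]
    show P.1 (prj t) = _
    rw [h1]
    show (∫ s in (0:ℝ)..1, G α β ξ t s * Φ P s) = _
    apply intervalIntegral.integral_congr
    intro s hs
    rw [Set.uIcc_of_le zero_le_one] at hs
    show G α β ξ t s * Φ P s = G α β ξ t s * f s (P.1 (prj s)) (P.2 (prj s))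
    have : ((prj s : Set.Icc (0:ℝ) 1):ℝ) = s := by rw [hprj s hs]
    show G α β ξ t s * f ((prj s : Set.Icc (0:ℝ) 1):ℝ) (P.1 (prj s)) (P.2 (prj s)) = _
    rw [this]
  · intro t ht
    have h1 : P.2 (prj t) = T2 P t := by
      conv_lhs => rw [← hP]
      show T2 P ((prj t : Set.Icc (0:ℝ) 1):ℝ) = T2 P t
      rw [hprj t ht]
    show P.2 (prj t) = _
    rw [h1]
    show (∫ s in (0:ℝ)..t, Φ P s)
        - (Real.Gamma (2 - β) * t ^ (2 - α) / (Real.Gamma (3 - α) * Real.Gamma (α - β)))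
            * ∫ s in (0:ℝ)..1, w s * Φ P s = _
    congr 1
    · apply intervalIntegral.integral_congr
      intro s hs
      rw [Set.uIcc_of_le ht.1] at hs
      have hs1 : s ∈ Set.Icc (0:ℝ) 1 := ⟨hs.1, hs.2.trans ht.2⟩
      show Φ P s = f s (P.1 (prj s)) (P.2 (prj s))
      have hse : ((prj s : Set.Icc (0:ℝ) 1):ℝ) = s := by rw [hprj s hs1]
      show f ((prj s : Set.Icc (0:ℝ) 1):ℝ) (P.1 (prj s)) (P.2 (prj s)) = _
      rw [hse]
    · congr 1
      apply intervalIntegral.integral_congr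
      intro s hs
      rw [Set.uIcc_of_le zero_le_one] at hs
      show w s * Φ P s = (1 - s) ^ (α - β - 1) * f s (P.1 (prj s)) (P.2 (prj s))
      have hse : ((prj s : Set.Icc (0:ℝ) 1):ℝ) = s := by rw [hprj s hs]
      show w s * f ((prj s : Set.Icc (0:ℝ) 1):ℝ) (P.1 (prj s)) (P.2 (prj s)) = _
      rw [hse]
  · rintro u' v' ⟨hu'c, hv'c, he1, he2⟩ t ht
    let U' : C(Set.Icc (0:ℝ) 1, ℝ) := ⟨(Set.Icc (0:ℝ) 1).restrict u', hu'c.restrict⟩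
    let V' : C(Set.Icc (0:ℝ) 1, ℝ) := ⟨(Set.Icc (0:ℝ) 1).restrict v', hv'c.restrict⟩
    have hΦ' : ∀ s ∈ Set.Icc (0:ℝ) 1,
        Φ (U', V') s = f s (u' s) (v' s) := by
      intro s hs
      show f ((prj s : Set.Icc (0:ℝ) 1):ℝ) (U' (prj s)) (V' (prj s)) = _
      rw [hprj s hs]
      rfl
    have hfix : Function.IsFixedPt T (U', V') := by
      show T (U', V') = (U', V')
      refine Prod.ext ?_ ?_
      · ext x
        show T1 (U', V') (x:ℝ) = u' (x:ℝ)
        rw [he1 (x:ℝ) x.2]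
        apply intervalIntegral.integral_congr
        intro s hs
        rw [Set.uIcc_of_le zero_le_one] at hs
        show G α β ξ (x:ℝ) s * Φ (U', V') s = _
        rw [hΦ' s hs]
      · ext x
        show T2 (U', V') (x:ℝ) = v' (x:ℝ)
        rw [he2 (x:ℝ) x.2]
        show (∫ s in (0:ℝ)..(x:ℝ), Φ (U', V') s)
            - (Real.Gamma (2 - β) * (x:ℝ) ^ (2 - α)
                / (Real.Gamma (3 - α) * Real.Gamma (α - β)))
                * ∫ s in (0:ℝ)..1, w s * Φ (U', V') s = _
        congr 1
        · apply intervalIntegral.integral_congr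
          intro s hs
          rw [Set.uIcc_of_le x.2.1] at hs
          exact hΦ' s ⟨hs.1, hs.2.trans x.2.2⟩
        · congr 1
          apply intervalIntegral.integral_congr
          intro s hs
          rw [Set.uIcc_of_le zero_le_one] at hs
          show w s * Φ (U', V') s = (1 - s) ^ (α - β - 1) * f s (u' s) (v' s)
          rw [hΦ' s hs]
    have hPU : (U', V') = P := hCW.fixedPoint_unique hfix
    constructor
    · show u' t = P.1 (prj t)
      rw [← hPU, hprj t ht]
      rfl
    · show v' t = P.2 (prj t)
      rw [← hPU, hprj t ht]
      rfl
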